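/- Let a, b : ℝ → ℝ be continuously differentiable on (0,1) and let α₁, α₂, β₁, β₂ be constants with α₁ ≤ a'(x) ≤ α₂ for all x ∈ (0,1), β₁ ≤ b'(y) ≤ β₂ for all y ∈ (0,1), α₁ > β₂ and β₁ > 0. Define φ(x+iy) = a(x) + i·b(y) on Ω = (0,1) × (0,1). Then for every z = x+iy ∈ Ω: (1) the Jacobian determinant of φ at z equals a'(x)·b'(y) and satisfies α₁β₁ ≤ a'(x)b'(y) ≤ α₂β₂; and (2) the operator norm of the derivative of φ at z satisfies ‖Dφ(z)‖² ≤ (α₂/β₁) · a'(x)·b'(y); in particular φ is a quasiconformal, quasi-preserving measure homeomorphism with quasiconformality coefficient at most α₂/β₁. -/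

import Mathlib

open Set

noncomputable section

/-- for `φ(x+iy) = a(x) + i·b(y)` on the unit square with
`α₁ ≤ a' ≤ α₂`, `β₁ ≤ b' ≤ β₂`, `α₁ > β₂`, `β₁ > 0`, the Jacobian determinant equals
`a'(x)b'(y) ∈ [α₁β₁, α₂β₂]` and the squared operator norm of the derivative is at most
`(α₂/β₁)·a'(x)b'(y)`; in particular `φ` is quasiconformal with coefficient at most `α₂/β₁`
and quasi-preserves measure. -/
theorem stmt16 (a b a' b' : ℝ → ℝ) (α₁ α₂ β₁ β₂ : ℝ)
    (ha : ∀ x ∈ Set.Ioo (0 : ℝ) 1, HasDerivAt a (a' x) x)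
    (hb : ∀ y ∈ Set.Ioo (0 : ℝ) 1, HasDerivAt b (b' y) y)
    (ha' : ContinuousOn a' (Set.Ioo 0 1)) (hb' : ContinuousOn b' (Set.Ioo 0 1))
    (hA1 : ∀ x ∈ Set.Ioo (0 : ℝ) 1, α₁ ≤ a' x) (hA2 : ∀ x ∈ Set.Ioo (0 : ℝ) 1, a' x ≤ α₂)
    (hB1 : ∀ y ∈ Set.Ioo (0 : ℝ) 1, β₁ ≤ b' y) (hB2 : ∀ y ∈ Set.Ioo (0 : ℝ) 1, b' y ≤ β₂)
    (hαβ : β₂ < α₁) (hβ : 0 < β₁)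
    (φ : ℂ → ℂ) (hφ : ∀ z : ℂ, φ z = ((a z.re : ℝ) : ℂ) + Complex.I * ((b z.im : ℝ) : ℂ))
    (z : ℂ) (hz : z.re ∈ Set.Ioo (0 : ℝ) 1 ∧ z.im ∈ Set.Ioo (0 : ℝ) 1) :
    DifferentiableAt ℝ φ z ∧
    LinearMap.det ((fderiv ℝ φ z : ℂ →L[ℝ] ℂ) : ℂ →ₗ[ℝ] ℂ) = a' z.re * b' z.im ∧
    α₁ * β₁ ≤ a' z.re * b' z.im ∧ a' z.re * b' z.im ≤ α₂ * β₂ ∧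
    ‖fderiv ℝ φ z‖ ^ 2 ≤ (α₂ / β₁) * (a' z.re * b' z.im) := by
  obtain ⟨hx, hy⟩ := hz
  set A := a' z.re with hA
  set B := b' z.im with hB
  -- basic inequalities
  have hA1' : α₁ ≤ A := hA1 _ hx
  have hA2' : A ≤ α₂ := hA2 _ hx
  have hB1' : β₁ ≤ B := hB1 _ hy
  have hB2' : B ≤ β₂ := hB2 _ hy
  have hBpos : 0 < B := lt_of_lt_of_le hβ hB1'
  have hApos : 0 < A := lt_of_lt_of_le (lt_trans (lt_of_lt_of_le hβ (le_trans hB1' hB2')) hαβ) hA1'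
  have hBA : B ≤ A := le_trans hB2' (le_trans hαβ.le hA1')
  -- the derivative
  set L : ℂ →L[ℝ] ℂ :=
    A • (Complex.ofRealCLM.comp Complex.reCLM) +
      B • ((Complex.imCLM : ℂ →L[ℝ] ℝ).smulRight Complex.I) with hL
  have hLapply : ∀ w : ℂ, L w = (↑(A * w.re) : ℂ) + Complex.I * (↑(B * w.im) : ℂ) := by
    intro w
    simp [hL, Complex.ext_iff, mul_comm]
  have hder : HasFDerivAt φ L z := by
    have h1 : HasFDerivAt (fun w : ℂ => ((a w.re : ℝ) : ℂ))
        (A • (Complex.ofRealCLM.comp Complex.reCLM)) z := by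
      have hre : HasFDerivAt (fun w : ℂ => w.re) (Complex.reCLM : ℂ →L[ℝ] ℝ) z :=
        Complex.reCLM.hasFDerivAt
      have := ((ha _ hx).hasFDerivAt.comp z hre)
      have h2 := Complex.ofRealCLM.hasFDerivAt.comp z this
      refine h2.congr_fderiv ?_
      ext w
      simp [mul_comm, hA]
    have h2 : HasFDerivAt (fun w : ℂ => Complex.I * ((b w.im : ℝ) : ℂ))
        (B • ((Complex.imCLM : ℂ →L[ℝ] ℝ).smulRight Complex.I)) z := by
      have him : HasFDerivAt (fun w : ℂ => w.im) (Complex.imCLM : ℂ →L[ℝ] ℝ) z :=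
        Complex.imCLM.hasFDerivAt
      have := ((hb _ hy).hasFDerivAt.comp z him)
      have h3 := Complex.ofRealCLM.hasFDerivAt.comp z this
      have h4 := h3.const_mul Complex.I
      refine h4.congr_fderiv ?_
      ext w
      simp [Complex.ext_iff, mul_comm, hB]
    have := h1.add h2
    have heq : φ = fun w : ℂ => ((a w.re : ℝ) : ℂ) + Complex.I * ((b w.im : ℝ) : ℂ) :=
      funext hφ
    rw [heq]
    exact this
  have hdiff : DifferentiableAt ℝ φ z := hder.differentiableAt
  have hfd : fderiv ℝ φ z = L := hder.fderiv
  refine ⟨hdiff, ?_, ?_, ?_, ?_⟩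
  · rw [hfd]
    have : LinearMap.det ((L : ℂ →L[ℝ] ℂ) : ℂ →ₗ[ℝ] ℂ) =
        Matrix.det (LinearMap.toMatrix Complex.basisOneI Complex.basisOneI
          ((L : ℂ →L[ℝ] ℂ) : ℂ →ₗ[ℝ] ℂ)) := (LinearMap.det_toMatrix _ _).symm
    rw [this, Matrix.det_fin_two]
    simp only [LinearMap.toMatrix_apply, ContinuousLinearMap.coe_coe,
      Complex.coe_basisOneI, Complex.coe_basisOneI_repr]
    simp [hLapply]
  · exact mul_le_mul hA1' hB1' hβ.le hApos.le
  · exact mul_le_mul hA2' hB2' hBpos.le (le_trans hApos.le hA2')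
  · rw [hfd]
    have hnorm : ‖L‖ ≤ A := by
      apply ContinuousLinearMap.opNorm_le_bound _ hApos.le
      intro w
      have hsq : ‖L w‖ ^ 2 ≤ (A * ‖w‖) ^ 2 := by
        have h1 : ‖L w‖ ^ 2 = (A * w.re) ^ 2 + (B * w.im) ^ 2 := by
          rw [hLapply, Complex.sq_norm, Complex.normSq_apply]
          simp
          ring
        have h2 : (A * ‖w‖) ^ 2 = A ^ 2 * (w.re ^ 2 + w.im ^ 2) := by
          rw [mul_pow, Complex.sq_norm, Complex.normSq_apply]
          ring
        rw [h1, h2]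
        nlinarith [mul_nonneg (by nlinarith : (0:ℝ) ≤ A ^ 2 - B ^ 2) (sq_nonneg w.im)]
      have := Real.sqrt_le_sqrt hsq
      rwa [Real.sqrt_sq (norm_nonneg _), Real.sqrt_sq (by positivity)] at this
    have h2 : ‖L‖ ^ 2 ≤ A ^ 2 := by
      exact pow_le_pow_left₀ (norm_nonneg L) hnorm 2
    refine le_trans h2 ?_
    rw [div_mul_eq_mul_div, le_div_iff₀ hβ]
    calc A ^ 2 * β₁ ≤ A ^ 2 * B := by nlinarith
      _ = A * (A * B) := by ring
      _ ≤ α₂ * (A * B) :=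
        mul_le_mul_of_nonneg_right hA2' (mul_pos hApos hBpos).le
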